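/- If a finitely generated group Γ is virtually nilpotent, then its algebraic entropy vanishes: h_w(Γ,S) = 0 for every finite symmetric generating set S. -/

import Mathlib

open Filter Topology

def wordBall {G : Type*} [Group G] (S : Set G) (R : ℕ) : Set G :=
  {g | ∃ l : List G, (∀ x ∈ l, x ∈ S) ∧ l.length ≤ R ∧ l.prod = g}

namespace VN
variable {G H : Type*} [Group G] [Group H]

lemma prod_mem_wordBall {S : Set G} {R : ℕ} (l : List G) (h : ∀ x ∈ l, x ∈ S)
    (hl : l.length ≤ R) : l.prod ∈ wordBall S R := ⟨l, h, hl, rfl⟩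

lemma one_mem_wordBall (S : Set G) (R : ℕ) : (1 : G) ∈ wordBall S R :=
  ⟨[], by simp, by simp, by simp⟩

lemma wordBall_mono_R {S : Set G} {R R' : ℕ} (h : R ≤ R') : wordBall S R ⊆ wordBall S R' := by
  rintro g ⟨l, h1, h2, h3⟩; exact ⟨l, h1, h2.trans h, h3⟩

lemma wordBall_mono_S {S S' : Set G} (h : S ⊆ S') (R : ℕ) : wordBall S R ⊆ wordBall S' R := by
  rintro g ⟨l, h1, h2, h3⟩; exact ⟨l, fun x hx => h (h1 x hx), h2, h3⟩

lemma mul_mem_wordBall {S : Set G} {R R' : ℕ} {g g' : G} (hg : g ∈ wordBall S R)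
    (hg' : g' ∈ wordBall S R') : g * g' ∈ wordBall S (R + R') := by
  obtain ⟨l, h1, h2, h3⟩ := hg
  obtain ⟨l', h1', h2', h3'⟩ := hg'
  refine ⟨l ++ l', ?_, ?_, by rw [List.prod_append, h3, h3']⟩
  · intro x hx; rcases List.mem_append.1 hx with h | h
    · exact h1 x h
    · exact h1' x h
  · simpa using Nat.add_le_add h2 h2'

lemma wordBall_zero (S : Set G) : wordBall S 0 ⊆ {1} := by
  rintro g ⟨l, _, h2, h3⟩
  interval_cases h : l.length
  · simp at h3 ⊢
    rw [← h3, List.length_eq_zero_iff.mp h, List.prod_nil]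

lemma wordBall_finite {S : Set G} (hS : S.Finite) (R : ℕ) : (wordBall S R).Finite := by
  induction R with
  | zero => exact Set.Finite.subset (Set.finite_singleton 1) (wordBall_zero S)
  | succ n ih =>
      refine Set.Finite.subset (Set.Finite.insert 1 (Set.Finite.image2 (· * ·) hS ih)) ?_
      rintro g ⟨l, h1, h2, h3⟩
      match l with
      | [] => left; simp at h3; simp [h3.symm]
      | x :: l' =>
          right
          refine Set.mem_image2.2 ⟨x, h1 x (by simp), l'.prod, ?_, by simp [← h3]⟩
          exact ⟨l', fun y hy => h1 y (by simp [hy]), by simpa using Nat.succ_le_succ_iff.mp h2, rfl⟩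

lemma map_wordBall (f : G →* H) (S : Set G) (R : ℕ) :
    wordBall (f '' S) R = f '' wordBall S R := by
  ext g
  constructor
  · rintro ⟨l, h1, h2, h3⟩
    have : ∀ l : List H, (∀ x ∈ l, x ∈ f '' S) →
        ∃ l' : List G, (∀ x ∈ l', x ∈ S) ∧ l'.map f = l := by
      intro l
      induction l with
      | nil => exact fun _ => ⟨[], by simp, rfl⟩
      | cons a t ih =>
          intro hmem
          obtain ⟨l', hl'1, hl'2⟩ := ih fun x hx => hmem x (by simp [hx])
          obtain ⟨a', ha'1, ha'2⟩ := hmem a (by simp)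
          refine ⟨a' :: l', ?_, by simp [ha'2, hl'2]⟩
          intro x hx
          rcases List.mem_cons.1 hx with rfl | hx
          exacts [ha'1, hl'1 x hx]
    obtain ⟨l', hl'1, hl'2⟩ := this l h1
    refine ⟨l'.prod, ⟨l', hl'1, ?_, rfl⟩, ?_⟩
    · have := congrArg List.length hl'2
      simp only [List.length_map] at this
      omega
    · rw [← h3, ← hl'2]
      exact (List.prod_hom l' f).symm
  · rintro ⟨g', ⟨l, h1, h2, h3⟩, rfl⟩
    refine ⟨l.map f, ?_, by simpa using h2, by rw [List.prod_hom l f, h3]⟩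
    intro x hx
    obtain ⟨y, hy, rfl⟩ := List.mem_map.1 hx
    exact ⟨y, h1 y hy, rfl⟩



/-- bracket -/
def br (a b : G) : G := a⁻¹ * b⁻¹ * a * b

open scoped commutatorElement in
lemma br_eq_commutatorElement (a b : G) : br a b = ⁅a⁻¹, b⁻¹⁆ := by
  simp [br, commutatorElement_def]

lemma conj_eq_mul_br (a b : G) : b⁻¹ * a * b = a * br a b := by
  simp [br]; group

lemma br_mem_commutator {K L : Subgroup G} {a b : G} (ha : a ∈ K) (hb : b ∈ L) :
    br a b ∈ ⁅K, L⁆ := by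
  rw [br_eq_commutatorElement]
  exact Subgroup.commutator_mem_commutator (inv_mem ha) (inv_mem hb)

/-- length bound function -/
def Fb (c w r : ℕ) : ℕ := (r + 1) ^ (c - w) - 1

lemma Fb_rec {c w : ℕ} (h : w < c) (r : ℕ) :
    Fb c w r + 1 + Fb c (w + 1) r ≤ Fb c w (r + 1) := by
  unfold Fb
  have e1 : c - w = (c - (w+1)) + 1 := by omega
  set e := c - (w + 1)
  rw [e1]
  have h1 : 1 ≤ (r + 1) ^ e := Nat.one_le_pow _ _ (by omega)
  have h2 : 1 ≤ (r + 1) ^ (e + 1) := Nat.one_le_pow _ _ (by omega)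
  have key : (r + 1) ^ (e + 1) + (r + 1) ^ e ≤ (r + 1 + 1) ^ (e + 1) := by
    calc (r + 1) ^ (e + 1) + (r + 1) ^ e = (r + 1) ^ e * (r + 2) := by ring
    _ ≤ (r + 2) ^ e * (r + 2) := by
        exact Nat.mul_le_mul_right _ (Nat.pow_le_pow_left (by omega) _)
    _ = (r + 1 + 1) ^ (e + 1) := by ring
  omega

lemma Fb_mono_r {c w r r' : ℕ} (h : r ≤ r') : Fb c w r ≤ Fb c w r' :=
  Nat.sub_le_sub_right (Nat.pow_le_pow_left (by omega) _) 1

lemma Fb_anti_w {c w w' : ℕ} (h : w ≤ w') (r : ℕ) : Fb c w' r ≤ Fb c w r :=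
  Nat.sub_le_sub_right (Nat.pow_le_pow_right (by omega) (by omega)) 1

lemma Fb_le (c w r : ℕ) : Fb c w r ≤ (r + 1) ^ c :=
  le_trans (Nat.sub_le _ _) (Nat.pow_le_pow_right (by omega) (by omega))

/-- iterated brackets -/
def iterBr (T : Set G) : ℕ → Set G
  | 0 => T
  | k + 1 => Set.image2 br (iterBr T k) T

lemma iterBr_finite {T : Set G} (hT : T.Finite) : ∀ k, (iterBr T k).Finite
  | 0 => hT
  | k + 1 => Set.Finite.image2 _ (iterBr_finite hT k) hT

lemma iterBr_subset_lcs {T : Set G} {j : ℕ} (hT : ∀ x ∈ T, x ∈ (⊤ : Subgroup G).lowerCentralSeries j) :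
    ∀ k, ∀ x ∈ iterBr T k, x ∈ (⊤ : Subgroup G).lowerCentralSeries (j + k)
  | 0 => by simpa [iterBr] using hT
  | k + 1 => by
      rintro x ⟨a, ha, b, hb, rfl⟩
      have h1 : br a b ∈ ⁅(⊤ : Subgroup G).lowerCentralSeries (j + k), (⊤ : Subgroup G)⁆ :=
        br_mem_commutator (iterBr_subset_lcs hT k a ha) (Subgroup.mem_top b)
      exact h1



section Conj

variable {G : Type*} [Group G]

/-- alphabet of iterated brackets -/
def Aset (c : ℕ) (T : Set G) : Set G := insert 1 (⋃ k ∈ Finset.Icc 1 c, iterBr T k)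

lemma Aset_finite {T : Set G} (hTf : T.Finite) (c : ℕ) : (Aset c T).Finite :=
  Set.Finite.insert _ (Set.Finite.biUnion (Finset.finite_toSet _)
    fun k _ => iterBr_finite hTf k)

lemma one_mem_Aset (c : ℕ) (T : Set G) : (1 : G) ∈ Aset c T := Set.mem_insert _ _

lemma iterBr_subset_Aset {c j : ℕ} (hc : (⊤ : Subgroup G).lowerCentralSeries c = ⊥) {T : Set G}
    (hT : ∀ x ∈ T, x ∈ (⊤ : Subgroup G).lowerCentralSeries j) {k : ℕ} (hk : 1 ≤ k) :
    iterBr T k ⊆ Aset c T := by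
  intro x hx
  by_cases hkc : k ≤ c
  · exact Set.mem_insert_iff.2 (Or.inr (Set.mem_biUnion (Finset.mem_Icc.2 ⟨hk, hkc⟩) hx))
  · have h1 : x ∈ (⊤ : Subgroup G).lowerCentralSeries (j + k) := iterBr_subset_lcs hT k x hx
    have h2 : (⊤ : Subgroup G).lowerCentralSeries (j + k) ≤ (⊤ : Subgroup G).lowerCentralSeries c :=
      Subgroup.lowerCentralSeries_antitone _ (by omega)
    rw [hc] at h2
    have := h2 h1
    rw [Subgroup.mem_bot] at this
    exact this ▸ Set.mem_insert _ _

lemma Aset_subset_lcs {c j : ℕ} (hc : (⊤ : Subgroup G).lowerCentralSeries c = ⊥) {T : Set G}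
    (hT : ∀ x ∈ T, x ∈ (⊤ : Subgroup G).lowerCentralSeries j) :
    ∀ x ∈ Aset c T, x ∈ (⊤ : Subgroup G).lowerCentralSeries (j + 1) := by
  intro x hx
  rcases Set.mem_insert_iff.1 hx with rfl | hx
  · exact Subgroup.one_mem _
  · obtain ⟨k, hk, hxk⟩ := Set.mem_iUnion₂.1 hx
    have hk1 : 1 ≤ k := (Finset.mem_Icc.1 hk).1
    have h1 : x ∈ (⊤ : Subgroup G).lowerCentralSeries (j + k) := iterBr_subset_lcs hT k x hxk
    exact Subgroup.lowerCentralSeries_antitone _ (by omega) h1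

/-- the key conjugation lemma -/
lemma conj_lemma {c j : ℕ} (hc : (⊤ : Subgroup G).lowerCentralSeries c = ⊥) {T : Set G}
    (hT : ∀ x ∈ T, x ∈ (⊤ : Subgroup G).lowerCentralSeries j) :
    ∀ (v : List G), (∀ x ∈ v, x ∈ T) → ∀ (k : ℕ) (x : G), x ∈ iterBr T k →
      ∃ u : List G, (∀ y ∈ u, y ∈ Aset c T) ∧ u.length ≤ Fb c (j + k) v.length ∧
        x * u.prod = v.prod⁻¹ * x * v.prod := by
  intro v
  induction v with
  | nil => intro _ k x _; exact ⟨[], by simp, by simp, by simp⟩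
  | cons s v' ih =>
      intro hv k x hx
      have hs : s ∈ T := hv s (by simp)
      have hv' : ∀ y ∈ v', y ∈ T := fun y hy => hv y (by simp [hy])
      by_cases hw : c ≤ j + k
      · -- x is trivial
        have h1 : x ∈ (⊤ : Subgroup G).lowerCentralSeries c :=
          Subgroup.lowerCentralSeries_antitone _ hw (iterBr_subset_lcs hT k x hx)
        rw [hc, Subgroup.mem_bot] at h1
        subst h1
        refine ⟨[], by simp, by simp, ?_⟩
        simp only [List.prod_nil, List.prod_cons, mul_one]
        group
      · obtain ⟨u₁, hu₁A, hu₁l, hu₁p⟩ := ih hv' k x hx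
        have hbr : br x s ∈ iterBr T (k + 1) := Set.mem_image2_of_mem hx hs
        obtain ⟨u₂, hu₂A, hu₂l, hu₂p⟩ := ih hv' (k + 1) (br x s) hbr
        refine ⟨u₁ ++ br x s :: u₂, ?_, ?_, ?_⟩
        · intro y hy
          rcases List.mem_append.1 hy with h | h
          · exact hu₁A y h
          · rcases List.mem_cons.1 h with rfl | h
            · exact iterBr_subset_Aset hc hT (by omega) hbr
            · exact hu₂A y h
        · have := Fb_rec (show j + k < c by omega) v'.length
          have h2 : Fb c (j + (k + 1)) v'.length = Fb c (j + k + 1) v'.length := by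
            rw [← add_assoc]
          rw [h2] at hu₂l
          simp only [List.length_append, List.length_cons]
          calc u₁.length + (u₂.length + 1)
              ≤ Fb c (j + k) v'.length + 1 + Fb c (j + k + 1) v'.length := by omega
            _ ≤ Fb c (j + k) (v'.length + 1) := by omega
        · have e1 : u₁.prod = x⁻¹ * (v'.prod⁻¹ * x * v'.prod) := by
            rw [← hu₁p]; group
          have e2 : u₂.prod = (br x s)⁻¹ * (v'.prod⁻¹ * br x s * v'.prod) := by
            rw [← hu₂p]; group
          simp only [List.prod_append, List.prod_cons]
          rw [e1, e2, br]
          group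

end Conj

section Merge

variable {G : Type*} [Group G]

lemma conjword {c j : ℕ} (hc : (⊤ : Subgroup G).lowerCentralSeries c = ⊥) {T : Set G}
    (hT : ∀ x ∈ T, x ∈ (⊤ : Subgroup G).lowerCentralSeries j) :
    ∀ (u : List G), (∀ y ∈ u, y ∈ Aset c T) → ∀ (W : List G), (∀ x ∈ W, x ∈ T) →
      ∃ u' : List G, (∀ y ∈ u', y ∈ Aset c T) ∧
        u'.length ≤ u.length * (1 + Fb c (j + 1) W.length) ∧
        u'.prod = W.prod⁻¹ * u.prod * W.prod := by
  intro u
  induction u with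
  | nil => intro _ W _; exact ⟨[], by simp, by simp, by simp⟩
  | cons a u' ih =>
      intro hu W hW
      have ha : a ∈ Aset c T := hu a (by simp)
      have hu' : ∀ y ∈ u', y ∈ Aset c T := fun y hy => hu y (by simp [hy])
      obtain ⟨u₀, hu₀A, hu₀l, hu₀p⟩ := ih hu' W hW
      have key : ∃ wa : List G, (∀ y ∈ wa, y ∈ Aset c T) ∧
          wa.length ≤ 1 + Fb c (j + 1) W.length ∧ wa.prod = W.prod⁻¹ * a * W.prod := by
        rcases Set.mem_insert_iff.1 ha with rfl | hmem
        · exact ⟨[], by simp, by simp, by simp⟩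
        · obtain ⟨k, hk, hak⟩ := Set.mem_iUnion₂.1 hmem
          have hk1 : 1 ≤ k := (Finset.mem_Icc.1 hk).1
          obtain ⟨u₁, hA, hl, hp⟩ := conj_lemma hc hT W hW k a hak
          refine ⟨a :: u₁, ?_, ?_, by simpa using hp⟩
          · intro y hy
            rcases List.mem_cons.1 hy with rfl | hy
            exacts [ha, hA y hy]
          · have := Fb_anti_w (c := c) (show j + 1 ≤ j + k by omega) W.length
            simp only [List.length_cons]
            omega
      obtain ⟨wa, hwaA, hwal, hwap⟩ := key
      refine ⟨wa ++ u₀, ?_, ?_, ?_⟩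
      · intro y hy
        rcases List.mem_append.1 hy with h | h
        exacts [hwaA y h, hu₀A y h]
      · simp only [List.length_append, List.length_cons]
        calc wa.length + u₀.length
            ≤ (1 + Fb c (j + 1) W.length) + u'.length * (1 + Fb c (j + 1) W.length) := by omega
          _ = (u'.length + 1) * (1 + Fb c (j + 1) W.length) := by ring
      · simp only [List.prod_append, List.prod_cons, hwap, hu₀p]
        group

/-- canonical sorted product -/
def sortProd {d : ℕ} (τ : Fin d → G) (ι : List (Fin d)) : G :=
  ((ι.insertionSort (· ≤ ·)).map τ).prod

lemma sortProd_eq_of_perm {d : ℕ} (τ : Fin d → G) {ι ι' : List (Fin d)} (h : ι.Perm ι') :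
    sortProd τ ι = sortProd τ ι' := by
  have heq : ι.insertionSort (· ≤ ·) = ι'.insertionSort (· ≤ ·) :=
    List.Perm.eq_of_pairwise'
      (List.pairwise_insertionSort _ ι) (List.pairwise_insertionSort _ ι')
      ((List.perm_insertionSort _ ι).trans (h.trans (List.perm_insertionSort _ ι').symm))
  rw [sortProd, sortProd, heq]

lemma merge {c j : ℕ} (hc : (⊤ : Subgroup G).lowerCentralSeries c = ⊥) {d : ℕ} {τ : Fin d → G}
    (hτ : ∀ i, τ i ∈ (⊤ : Subgroup G).lowerCentralSeries j) (N : ℕ) :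
    ∀ ι : List (Fin d), ι.length ≤ N →
      ∃ u : List G, (∀ y ∈ u, y ∈ Aset c (Set.range τ)) ∧
        u.length ≤ ι.length * (Fb c j N * (1 + Fb c (j + 1) N)) ∧
        (ι.map τ).prod = sortProd τ ι * u.prod := by
  have hT : ∀ x ∈ Set.range τ, x ∈ (⊤ : Subgroup G).lowerCentralSeries j := by
    rintro x ⟨i, rfl⟩; exact hτ i
  intro ι
  induction ι with
  | nil => intro _; exact ⟨[], by simp, by simp, by simp [sortProd]⟩
  | cons i ι' ih =>
      intro hlen
      obtain ⟨u₀, hu₀A, hu₀l, hu₀p⟩ := ih (by simp at hlen ⊢; omega)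
      set sorted := ι'.insertionSort (· ≤ ·) with hsorted
      set tk := sorted.takeWhile (fun b => decide ¬(i ≤ b)) with htk
      set dp := sorted.dropWhile (fun b => decide ¬(i ≤ b)) with hdp
      have hsplit : (i :: ι').insertionSort (· ≤ ·) = tk ++ i :: dp := by
        rw [List.insertionSort]
        exact List.orderedInsert_eq_take_drop _ i sorted
      have htkdp : tk ++ dp = sorted := List.takeWhile_append_dropWhile
      have hlent : tk.length ≤ N := by
        have h1 : tk.length ≤ sorted.length :=
          List.Sublist.length_le (htk ▸ List.takeWhile_sublist _)
        have h2 : sorted.length = ι'.length := List.length_insertionSort _ _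
        simp at hlen; omega
      have hlend : dp.length ≤ N := by
        have h1 : dp.length ≤ sorted.length :=
          List.Sublist.length_le (hdp ▸ List.dropWhile_sublist _)
        have h2 : sorted.length = ι'.length := List.length_insertionSort _ _
        simp at hlen; omega
      set Wt := tk.map τ with hWt
      set Wd := dp.map τ with hWd
      have hWtT : ∀ x ∈ Wt, x ∈ Set.range τ := by
        intro x hx; obtain ⟨y, _, rfl⟩ := List.mem_map.1 hx; exact ⟨y, rfl⟩
      have hWdT : ∀ x ∈ Wd, x ∈ Set.range τ := by
        intro x hx; obtain ⟨y, _, rfl⟩ := List.mem_map.1 hx; exact ⟨y, rfl⟩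
      have hτi : τ i ∈ iterBr (Set.range τ) 0 := ⟨i, rfl⟩
      obtain ⟨u₁, hu₁A, hu₁l, hu₁p⟩ := conj_lemma hc hT Wt hWtT 0 (τ i) hτi
      obtain ⟨u₂, hu₂A, hu₂l, hu₂p⟩ := conjword hc hT u₁ hu₁A Wd hWdT
      refine ⟨u₂ ++ u₀, ?_, ?_, ?_⟩
      · intro y hy
        rcases List.mem_append.1 hy with h | h
        exacts [hu₂A y h, hu₀A y h]
      · have b1 : u₁.length ≤ Fb c j N := by
          have h3 : Wt.length ≤ N := by simpa [hWt] using hlent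
          simp only [Nat.add_zero] at hu₁l
          have h4 : Fb c j Wt.length ≤ Fb c j N := Fb_mono_r h3
          omega
        have b2 : u₂.length ≤ Fb c j N * (1 + Fb c (j + 1) N) := by
          have h4 : Wd.length ≤ N := by simpa [hWd] using hlend
          have := Fb_mono_r (c := c) (w := j + 1) h4
          calc u₂.length ≤ u₁.length * (1 + Fb c (j + 1) Wd.length) := hu₂l
            _ ≤ Fb c j N * (1 + Fb c (j + 1) N) := Nat.mul_le_mul b1 (by omega)
        simp only [List.length_append, List.length_cons]
        calc u₂.length + u₀.length
            ≤ Fb c j N * (1 + Fb c (j + 1) N) + ι'.length * (Fb c j N * (1 + Fb c (j + 1) N)) := by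
              omega
          _ = (ι'.length + 1) * (Fb c j N * (1 + Fb c (j + 1) N)) := by ring
      · have hΨ' : sortProd τ ι' = Wt.prod * Wd.prod := by
          rw [sortProd, ← hsorted, ← htkdp]
          simp [hWt, hWd]
        have hΨ : sortProd τ (i :: ι') = Wt.prod * (τ i * Wd.prod) := by
          rw [sortProd, hsplit]
          simp [hWt, hWd]
        have e1 : u₁.prod = (τ i)⁻¹ * (Wt.prod⁻¹ * τ i * Wt.prod) := by rw [← hu₁p]; group
        simp only [List.map_cons, List.prod_cons, List.prod_append, hu₀p, hΨ, hΨ', hu₂p, e1]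
        group

end Merge

section Count

variable {G : Type*} [Group G]

lemma list_lift {d : ℕ} (τ : Fin d → G) :
    ∀ l : List G, (∀ x ∈ l, x ∈ Set.range τ) → ∃ ι : List (Fin d), ι.map τ = l := by
  intro l
  induction l with
  | nil => exact fun _ => ⟨[], rfl⟩
  | cons a t ih =>
      intro h
      obtain ⟨ι', hι'⟩ := ih fun x hx => h x (by simp [hx])
      obtain ⟨i, hi⟩ := h a (by simp)
      exact ⟨i :: ι', by simp [hι', hi]⟩

lemma wordBall_subset_singleton {S : Set G} (hS : S ⊆ {1}) (N : ℕ) :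
    wordBall S N ⊆ {1} := by
  rintro g ⟨l, h1, _, h3⟩
  have : l.prod = 1 := List.prod_eq_one fun x hx => hS (h1 x hx)
  simp [← h3, this]

lemma card_wordBall_le_one {S : Set G} (hS : S ⊆ {1}) (N : ℕ) :
    Nat.card (wordBall S N) ≤ 1 := by
  rw [Nat.card_coe_set_eq]
  calc (wordBall S N).ncard ≤ ({1} : Set G).ncard :=
        Set.ncard_le_ncard (wordBall_subset_singleton hS N) (Set.finite_singleton 1)
    _ = 1 := Set.ncard_singleton 1

lemma level_count {c j d : ℕ} (hc : (⊤ : Subgroup G).lowerCentralSeries c = ⊥) {τ : Fin d → G}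
    (hτ : ∀ i, τ i ∈ (⊤ : Subgroup G).lowerCentralSeries j) (N : ℕ) :
    Nat.card (wordBall (Set.range τ) N) ≤
      (N + 1) ^ d * Nat.card (wordBall (Aset c (Set.range τ))
        (N * (Fb c j N * (1 + Fb c (j + 1) N)))) := by
  classical
  set A := Aset c (Set.range τ) with hA
  set M := N * (Fb c j N * (1 + Fb c (j + 1) N)) with hM
  have hAfin : A.Finite := Aset_finite (Set.finite_range τ) c
  haveI : Finite ↥(wordBall A M) := (wordBall_finite hAfin M).to_subtype
  -- construct the injection
  have main : ∀ g : ↥(wordBall (Set.range τ) N), ∃ p : List (Fin d),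
      p.length ≤ N ∧ (p.map τ).prod = (g : G) ∧
      (sortProd τ p)⁻¹ * (g : G) ∈ wordBall A M := by
    rintro ⟨g, l, h1, h2, h3⟩
    obtain ⟨ι, hι⟩ := list_lift τ l h1
    have hlen : ι.length ≤ N := by
      have := congrArg List.length hι
      simp only [List.length_map] at this
      omega
    obtain ⟨u, huA, hul, hup⟩ := merge hc hτ N ι hlen
    refine ⟨ι, hlen, by rw [hι]; exact h3, ?_⟩
    have : (sortProd τ ι)⁻¹ * g = u.prod := by
      rw [← h3, ← hι, hup]; group
    rw [this]
    exact prod_mem_wordBall u huA (hul.trans (Nat.mul_le_mul_right _ hlen))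
  choose p hp1 hp2 hp3 using main
  set f : ↥(wordBall (Set.range τ) N) → (Fin d → Fin (N + 1)) × ↥(wordBall A M) :=
    fun g => (fun i => ⟨(p g).count i, by
      have ha : (p g).count i ≤ (p g).length := List.count_le_length
      have hb := hp1 g
      omega⟩, ⟨(sortProd τ (p g))⁻¹ * (g : G), hp3 g⟩)
    with hf
  have hinj : Function.Injective f := by
    intro g₁ g₂ h
    have hcount : ∀ i, (p g₁).count i = (p g₂).count i := by
      intro i
      have := congrFun (congrArg Prod.fst h) i
      simpa [hf] using congrArg Fin.val this
    have hperm : (p g₁).Perm (p g₂) := List.perm_iff_count.2 hcount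
    have hsort : sortProd τ (p g₁) = sortProd τ (p g₂) := sortProd_eq_of_perm τ hperm
    have h2 := congrArg (fun x => (x.2 : G)) h
    simp only [hf] at h2
    rw [hsort] at h2
    exact Subtype.ext (by exact mul_left_cancel h2)
  calc Nat.card (wordBall (Set.range τ) N)
      ≤ Nat.card ((Fin d → Fin (N + 1)) × ↥(wordBall A M)) :=
        Nat.card_le_card_of_injective f hinj
    _ = (N + 1) ^ d * Nat.card (wordBall A M) := by
        rw [Nat.card_prod]
        congr 1
        simp [Nat.card_eq_fintype_card]

end Count

section Growth

variable {G : Type*} [Group G]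

lemma exists_fin_param {s : Set G} (h : s.Finite) : ∃ n, ∃ f : Fin n → G, Set.range f = s := by
  classical
  have : Fintype s := h.fintype
  refine ⟨Fintype.card s, fun i => ((Fintype.equivFin s).symm i : G), ?_⟩
  ext x
  simp only [Set.mem_range]
  constructor
  · rintro ⟨i, rfl⟩; exact ((Fintype.equivFin s).symm i).2
  · intro hx; exact ⟨Fintype.equivFin s ⟨x, hx⟩, by simp⟩

theorem nil_growth_aux (c : ℕ) (hc : (⊤ : Subgroup G).lowerCentralSeries c = ⊥) :
    ∀ (k j : ℕ), c ≤ j + k → ∀ (d : ℕ) (τ : Fin d → G),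
      (∀ i, τ i ∈ (⊤ : Subgroup G).lowerCentralSeries j) →
      ∃ C D : ℕ, ∀ N, Nat.card (wordBall (Set.range τ) N) ≤ C * (N + 1) ^ D := by
  intro k
  induction k with
  | zero =>
      intro j hj d τ hτ
      refine ⟨1, 0, fun N => ?_⟩
      have hsub : Set.range τ ⊆ {1} := by
        rintro x ⟨i, rfl⟩
        have h1 : τ i ∈ (⊤ : Subgroup G).lowerCentralSeries c :=
          Subgroup.lowerCentralSeries_antitone _ (by omega) (hτ i)
        rw [hc, Subgroup.mem_bot] at h1
        simp [h1]
      simpa using card_wordBall_le_one hsub N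
  | succ k ih =>
      intro j hj d τ hτ
      have hT : ∀ x ∈ Set.range τ, x ∈ (⊤ : Subgroup G).lowerCentralSeries j := by
        rintro x ⟨i, rfl⟩; exact hτ i
      have hAfin : (Aset c (Set.range τ)).Finite := Aset_finite (Set.finite_range τ) c
      obtain ⟨d', τ', hrange⟩ := exists_fin_param hAfin
      have hτ' : ∀ i, τ' i ∈ (⊤ : Subgroup G).lowerCentralSeries (j + 1) := fun i =>
        Aset_subset_lcs hc hT (τ' i) (hrange ▸ Set.mem_range_self i)
      obtain ⟨C, D, hCD⟩ := ih (j + 1) (by omega) d' τ' hτ'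
      rw [hrange] at hCD
      refine ⟨C * 2 ^ D, d + (2 * c + 1) * D, fun N => ?_⟩
      have hKb : Fb c j N * (1 + Fb c (j + 1) N) ≤ 2 * (N + 1) ^ (2 * c) := by
        have h1 := Fb_le c j N
        have h2 := Fb_le c (j + 1) N
        calc Fb c j N * (1 + Fb c (j + 1) N) ≤ (N + 1) ^ c * (2 * (N + 1) ^ c) := by
              have : 1 ≤ (N + 1) ^ c := Nat.one_le_pow _ _ (by omega)
              exact Nat.mul_le_mul h1 (by omega)
          _ = 2 * (N + 1) ^ (2 * c) := by rw [two_mul c, pow_add]; ring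
      have hMb : N * (Fb c j N * (1 + Fb c (j + 1) N)) + 1 ≤ 2 * (N + 1) ^ (2 * c + 1) := by
        have h3 : 1 ≤ 2 * (N + 1) ^ (2 * c) := by
          have := Nat.one_le_pow (2 * c) (N + 1) (by omega)
          omega
        calc N * (Fb c j N * (1 + Fb c (j + 1) N)) + 1
            ≤ N * (2 * (N + 1) ^ (2 * c)) + 2 * (N + 1) ^ (2 * c) :=
              Nat.add_le_add (Nat.mul_le_mul_left _ hKb) h3
          _ = 2 * (N + 1) ^ (2 * c + 1) := by ring
      calc Nat.card (wordBall (Set.range τ) N)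
          ≤ (N + 1) ^ d * Nat.card (wordBall (Aset c (Set.range τ))
              (N * (Fb c j N * (1 + Fb c (j + 1) N)))) := level_count hc hτ N
        _ ≤ (N + 1) ^ d *
              (C * (N * (Fb c j N * (1 + Fb c (j + 1) N)) + 1) ^ D) :=
              Nat.mul_le_mul_left _ (hCD _)
        _ ≤ (N + 1) ^ d * (C * (2 * (N + 1) ^ (2 * c + 1)) ^ D) := by
              have := Nat.pow_le_pow_left hMb D
              exact Nat.mul_le_mul_left _ (Nat.mul_le_mul_left _ this)
        _ = C * 2 ^ D * (N + 1) ^ (d + (2 * c + 1) * D) := by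
              rw [pow_add (N + 1) d ((2 * c + 1) * D), pow_mul (N + 1) (2 * c + 1) D, mul_pow]
              generalize ((N + 1 : ℕ) ^ (2 * c + 1)) = X
              ring

theorem nilpotent_poly_growth [hn : Group.IsNilpotent G] (T : Set G) (hT : T.Finite) :
    ∃ C D : ℕ, ∀ N, Nat.card (wordBall T N) ≤ C * (N + 1) ^ D := by
  obtain ⟨c, hc⟩ := Subgroup.nilpotent_iff_lowerCentralSeries.mp hn
  obtain ⟨d, τ, hrange⟩ := exists_fin_param hT
  obtain ⟨C, D, hCD⟩ := nil_growth_aux c hc c 0 (by omega) d τ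
    (fun i => by simp [Subgroup.lowerCentralSeries_zero])
  rw [hrange] at hCD
  exact ⟨C, D, hCD⟩

end Growth

section Schreier

variable {Γ : Type*} [Group Γ]

theorem virtually_nilpotent_poly_growth (H : Subgroup Γ) (hfi : H.FiniteIndex)
    (hnil : Group.IsNilpotent H) (S : Set Γ) (hfin : S.Finite) :
    ∃ C D : ℕ, ∀ N, Nat.card (wordBall S N) ≤ C * (N + 1) ^ D := by
  classical
  -- right coset space
  set Q := Quotient (QuotientGroup.rightRel H) with hQ
  have hQfin : Finite Q :=
    Finite.of_equiv _ (QuotientGroup.quotientRightRelEquivQuotientLeftRel H).symm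
  set mk : Γ → Q := fun g => Quotient.mk (QuotientGroup.rightRel H) g with hmk
  set rep : Q → Γ := fun q => if q = mk 1 then 1 else q.out with hrep
  have hrep_spec : ∀ q, mk (rep q) = q := by
    intro q
    by_cases h : q = mk 1
    · simp [hrep, h]
    · rw [hrep]; dsimp only; rw [if_neg h]; exact Quotient.out_eq q
  have hrep_one : rep (mk 1) = 1 := by simp [hrep]
  have hmem : ∀ g : Γ, g * (rep (mk g))⁻¹ ∈ H := by
    intro g
    have h1 : mk (rep (mk g)) = mk g := hrep_spec (mk g)
    have h2 := Quotient.exact h1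
    exact (QuotientGroup.rightRel_apply).1 h2
  have hmul_class : ∀ (g s : Γ), mk (rep (mk g) * s) = mk (g * s) := by
    intro g s
    refine Quotient.sound (QuotientGroup.rightRel_apply.2 ?_)
    have : g * s * (rep (mk g) * s)⁻¹ = g * (rep (mk g))⁻¹ := by group
    rw [this]
    exact hmem g
  set T : Set Γ := (fun p : Q × Γ => rep p.1 * p.2 * (rep (mk (rep p.1 * p.2)))⁻¹) ''
    (Set.univ ×ˢ S) with hT
  have hTH : ∀ t ∈ T, t ∈ H := by
    rintro t ⟨⟨q, s⟩, _, rfl⟩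
    exact hmem (rep q * s)
  have hTfin : T.Finite := Set.Finite.image _ (Set.Finite.prod Set.finite_univ hfin)
  -- Schreier rewriting
  have key : ∀ l : List Γ, (∀ x ∈ l, x ∈ S) →
      ∃ u : List Γ, (∀ x ∈ u, x ∈ T) ∧ u.length ≤ l.length ∧
        u.prod = l.prod * (rep (mk l.prod))⁻¹ := by
    intro l
    induction l using List.reverseRecOn with
    | nil => exact fun _ => ⟨[], by simp, by simp, by simp [hrep_one]⟩
    | append_singleton l' s ih =>
        intro hmem'
        obtain ⟨u', hu'T, hu'l, hu'p⟩ := ih fun x hx => hmem' x (by simp [hx])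
        have hsS : s ∈ S := hmem' s (by simp)
        set t := rep (mk l'.prod) * s * (rep (mk (rep (mk l'.prod) * s)))⁻¹ with ht
        have htT : t ∈ T := ⟨(mk l'.prod, s), by simp [hsS], rfl⟩
        refine ⟨u' ++ [t], ?_, by simpa using hu'l, ?_⟩
        · intro x hx
          rcases List.mem_append.1 hx with h | h
          · exact hu'T x h
          · rcases List.mem_singleton.1 h with rfl
            exact htT
        · rw [List.prod_append, List.prod_singleton, hu'p, ht, List.prod_append,
            List.prod_singleton]
          have hclass : mk (rep (mk l'.prod) * s) = mk (l'.prod * s) := hmul_class _ _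
          rw [hclass]
          group
  -- counting
  have count : ∀ N, Nat.card (wordBall S N) ≤ Nat.card (wordBall T N) * Nat.card Q := by
    intro N
    haveI : Finite ↥(wordBall T N) := (wordBall_finite hTfin N).to_subtype
    have main : ∀ g : ↥(wordBall S N), ((g : Γ) * (rep (mk (g : Γ)))⁻¹) ∈ wordBall T N := by
      rintro ⟨g, l, h1, h2, h3⟩
      obtain ⟨u, huT, hul, hup⟩ := key l h1
      have : (g : Γ) * (rep (mk g))⁻¹ = u.prod := by rw [hup, h3]
      rw [this]
      exact prod_mem_wordBall u huT (hul.trans h2)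
    set f : ↥(wordBall S N) → ↥(wordBall T N) × Q :=
      fun g => (⟨(g : Γ) * (rep (mk (g : Γ)))⁻¹, main g⟩, mk (g : Γ)) with hf
    have hinj : Function.Injective f := by
      intro g₁ g₂ h
      have h1 : mk (g₁ : Γ) = mk (g₂ : Γ) := congrArg Prod.snd h
      have h2 : (g₁ : Γ) * (rep (mk (g₁ : Γ)))⁻¹ = (g₂ : Γ) * (rep (mk (g₂ : Γ)))⁻¹ :=
        congrArg (fun x => ((x.1 : Γ)) ) h
      apply Subtype.ext
      calc (g₁ : Γ) = ((g₁ : Γ) * (rep (mk (g₁ : Γ)))⁻¹) * rep (mk (g₁ : Γ)) := by group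
        _ = ((g₂ : Γ) * (rep (mk (g₂ : Γ)))⁻¹) * rep (mk (g₂ : Γ)) := by rw [h2, h1]
        _ = (g₂ : Γ) := by group
    calc Nat.card (wordBall S N) ≤ Nat.card (↥(wordBall T N) × Q) :=
          Nat.card_le_card_of_injective f hinj
      _ = Nat.card (wordBall T N) * Nat.card Q := Nat.card_prod _ _
  -- transfer the ball in T to the subgroup H
  set T₀ : Set ↥H := Subtype.val ⁻¹' T with hT₀
  have hT₀fin : T₀.Finite := Set.Finite.preimage (Subtype.coe_injective.injOn) hTfin
  have hTimg : Subtype.val '' T₀ = T := by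
    ext x
    constructor
    · rintro ⟨y, hy, rfl⟩; exact hy
    · intro hx; exact ⟨⟨x, hTH x hx⟩, hx, rfl⟩
  obtain ⟨C, D, hCD⟩ := nilpotent_poly_growth (G := ↥H) T₀ hT₀fin
  have hcoe : ⇑H.subtype = (Subtype.val : ↥H → Γ) := rfl
  have htransfer : ∀ N, Nat.card (wordBall T N) = Nat.card (wordBall T₀ N) := by
    intro N
    have h1 : wordBall T N = Subtype.val '' wordBall T₀ N := by
      rw [← hTimg, ← hcoe, map_wordBall H.subtype T₀ N, hcoe]
    rw [h1, Nat.card_coe_set_eq, Nat.card_coe_set_eq,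
      Set.ncard_image_of_injective _ Subtype.coe_injective]
  refine ⟨C * Nat.card Q, D, fun N => ?_⟩
  calc Nat.card (wordBall S N) ≤ Nat.card (wordBall T N) * Nat.card Q := count N
    _ = Nat.card (wordBall T₀ N) * Nat.card Q := by rw [htransfer]
    _ ≤ C * (N + 1) ^ D * Nat.card Q := Nat.mul_le_mul_right _ (hCD N)
    _ = C * Nat.card Q * (N + 1) ^ D := by ring

end Schreier

end VN

/-- A finitely generated virtually nilpotent group has vanishing algebraic entropy. -/
theorem entropy_zero_of_virtually_nilpotent {Γ : Type*} [Group Γ]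
    (H : Subgroup Γ) (hfi : H.FiniteIndex) (hnil : Group.IsNilpotent H)
    (S : Set Γ) (hfin : S.Finite) (hsym : ∀ x ∈ S, x⁻¹ ∈ S)
    (hgen : Subgroup.closure S = ⊤) :
    Tendsto (fun R : ℕ => Real.log (Nat.card (wordBall S R)) / R) atTop (𝓝 0) := by
  obtain ⟨C, D, hCD⟩ := VN.virtually_nilpotent_poly_growth H hfi hnil S hfin
  have hpos : ∀ R, 1 ≤ Nat.card (wordBall S R) := by
    intro R
    haveI : Finite ↥(wordBall S R) := (VN.wordBall_finite hfin R).to_subtype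
    haveI : Nonempty ↥(wordBall S R) := ⟨⟨1, VN.one_mem_wordBall S R⟩⟩
    exact Nat.one_le_iff_ne_zero.2 Nat.card_pos.ne'
  set C' : ℕ := max C 1 with hC'
  have hC'1 : 1 ≤ C' := le_max_right _ _
  have hCD' : ∀ R, Nat.card (wordBall S R) ≤ C' * (R + 1) ^ D := fun R =>
    (hCD R).trans (Nat.mul_le_mul_right _ (le_max_left _ _))
  have hub : ∀ R : ℕ, Real.log (Nat.card (wordBall S R)) ≤
      Real.log C' + D * Real.log (R + 1) := by
    intro R
    have h1 : (0 : ℝ) < (Nat.card (wordBall S R) : ℝ) := by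
      exact_mod_cast hpos R
    have h2 : ((Nat.card (wordBall S R) : ℕ) : ℝ) ≤ (C' : ℝ) * ((R : ℝ) + 1) ^ D := by
      have := hCD' R
      push_cast
      exact_mod_cast this
    have h3 := Real.log_le_log h1 h2
    rwa [Real.log_mul (by positivity) (by positivity), Real.log_pow] at h3
  have hlog_nonneg : ∀ R : ℕ, 0 ≤ Real.log (Nat.card (wordBall S R)) := by
    intro R
    apply Real.log_nonneg
    exact_mod_cast hpos R
  -- the dominating sequence
  have t1 : Tendsto (fun R : ℕ => Real.log C' / R) atTop (𝓝 0) :=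
    tendsto_const_div_atTop_nhds_zero_nat _
  have t2 : Tendsto (fun R : ℕ => Real.log (R + 1) / (R + 1)) atTop (𝓝 0) := by
    have h := Real.isLittleO_log_id_atTop.tendsto_div_nhds_zero
    have hcomp : Tendsto (fun R : ℕ => (R : ℝ) + 1) atTop atTop :=
      tendsto_atTop_add_const_right atTop 1 tendsto_natCast_atTop_atTop
    exact h.comp hcomp
  have t3 : Tendsto (fun R : ℕ =>
      Real.log C' / R + (D : ℝ) * (2 * (Real.log (R + 1) / (R + 1)))) atTop (𝓝 0) := by
    have := t1.add (((t2.const_mul (2 : ℝ)).const_mul (D : ℝ)))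
    simpa using this
  apply squeeze_zero' (g := fun R : ℕ =>
      Real.log C' / R + (D : ℝ) * (2 * (Real.log (R + 1) / (R + 1)))) ?_ ?_ t3
  · filter_upwards with R
    exact div_nonneg (hlog_nonneg R) (by positivity)
  · filter_upwards [Filter.eventually_ge_atTop 1] with R hR
    have hR0 : (0 : ℝ) < (R : ℝ) := by exact_mod_cast hR
    have hR1 : (0 : ℝ) < (R : ℝ) + 1 := by positivity
    have step1 : Real.log (Nat.card (wordBall S R)) / R ≤
        (Real.log C' + D * Real.log (R + 1)) / R := by
      gcongr
      exact hub R
    have hlogR1 : (0 : ℝ) ≤ Real.log (R + 1) := Real.log_nonneg (by linarith)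
    have step2 : Real.log (R + 1) / R ≤ 2 * (Real.log (R + 1) / (R + 1)) := by
      rw [div_le_iff₀ hR0] at *
      have key : (R : ℝ) + 1 ≤ 2 * R := by
        have : (1 : ℝ) ≤ R := by exact_mod_cast hR
        linarith
      calc Real.log (R + 1) = Real.log (R + 1) * (((R : ℝ) + 1) / ((R : ℝ) + 1)) := by
            field_simp
        _ ≤ Real.log (R + 1) * ((2 * R) / ((R : ℝ) + 1)) := by
            apply mul_le_mul_of_nonneg_left _ hlogR1
            gcongr
        _ = 2 * (Real.log (R + 1) / ((R : ℝ) + 1)) * R := by ring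
    calc Real.log (Nat.card (wordBall S R)) / R
        ≤ (Real.log C' + D * Real.log (R + 1)) / R := step1
      _ = Real.log C' / R + (D : ℝ) * (Real.log (R + 1) / R) := by ring
      _ ≤ Real.log C' / R + (D : ℝ) * (2 * (Real.log (R + 1) / (R + 1))) := by
          apply add_le_add le_rfl
          exact mul_le_mul_of_nonneg_left step2 (by positivity)
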